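/- Let G be a primitive permutation group on an infinite set X that is not 2-homogeneous. Then there exists a G-invariant graph Γ with vertex set X such that for all distinct x, y ∈ X the symmetric difference Γ(x) △ Γ(y) of neighbour sets is infinite. -/

import Mathlib

open scoped symmDiff

section Aux

variable {X : Type*} [DecidableEq X]

/-- A graph is `G`-invariant. -/
private def GInv (G : Subgroup (Equiv.Perm X)) (Δ : SimpleGraph X) : Prop :=
  ∀ g ∈ G, ∀ x y : X, Δ.Adj x y ↔ Δ.Adj (g x) (g y)

private lemma sdTri {α : Type*} (a b c : Set α) :
    symmDiff a c ⊆ symmDiff a b ∪ symmDiff b c := by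
  intro z hz
  rw [Set.mem_symmDiff] at hz
  rw [Set.mem_union, Set.mem_symmDiff, Set.mem_symmDiff]
  by_cases hb : z ∈ b <;> tauto

private lemma nbhdMove {G : Subgroup (Equiv.Perm X)} {Δ : SimpleGraph X}
    (h : GInv G Δ) {g : Equiv.Perm X} (hg : g ∈ G) (x : X) :
    Δ.neighborSet (g x) = g '' Δ.neighborSet x := by
  ext y
  simp only [SimpleGraph.mem_neighborSet, Set.mem_image]
  constructor
  · intro hadj
    refine ⟨g⁻¹ y, ?_, by simp⟩
    have h2 := h g hg x (g⁻¹ y)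
    rw [show g (g⁻¹ y) = y by simp] at h2
    exact h2.mpr hadj
  · rintro ⟨w, hw, rfl⟩
    exact (h g hg x w).mp hw

/-- The contradiction in the locally finite case. -/
private lemma locfinContra {X : Type*} [Infinite X] [DecidableEq X]
    (G : Subgroup (Equiv.Perm X))
    (hprim : ∀ r : Setoid X, (∀ g ∈ G, ∀ x y : X, r.r x y → r.r (g x) (g y)) →
      (∀ x y : X, r.r x y → x = y) ∨ (∀ x y : X, r.r x y))
    (Λ : SimpleGraph X) (hΛ : GInv G Λ)
    {p q : X} (hpq : Λ.Adj p q)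
    (hlf : ∀ x : X, (Λ.neighborSet x).Finite)
    (hall : ∀ Δ : SimpleGraph X, GInv G Δ →
      ∀ x y : X, (symmDiff (Δ.neighborSet x) (Δ.neighborSet y)).Finite) :
    False := by
  classical
  -- group elements map walks to walks
  have hwalk : ∀ (g : Equiv.Perm X), g ∈ G → ∀ {x y : X} (w : Λ.Walk x y),
      ∃ w' : Λ.Walk (g x) (g y), w'.length = w.length := by
    intro g hg x y w
    induction w with
    | nil => exact ⟨SimpleGraph.Walk.nil, rfl⟩
    | cons h p ih =>
      obtain ⟨w', hw'⟩ := ih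
      exact ⟨SimpleGraph.Walk.cons ((hΛ g hg _ _).mp h) w', by simp [hw']⟩
  have hmapReach : ∀ g ∈ G, ∀ x y : X, Λ.Reachable x y → Λ.Reachable (g x) (g y) := by
    intro g hg x y hr
    obtain ⟨w⟩ := hr
    obtain ⟨w', _⟩ := hwalk g hg w
    exact ⟨w'⟩
  -- connectivity from primitivity
  have hconn : ∀ x y : X, Λ.Reachable x y := by
    have := hprim ⟨fun x y => Λ.Reachable x y,
      ⟨fun x => SimpleGraph.Reachable.refl x, fun h => h.symm, fun h h' => h.trans h'⟩⟩
      (fun g hg x y hr => hmapReach g hg x y hr)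
    rcases this with heq | htot
    · exact absurd (heq p q hpq.reachable) hpq.ne
    · exact htot
  have hCon : Λ.Connected := ⟨hconn⟩
  -- invariance of the distance
  have hle : ∀ g ∈ G, ∀ x y : X, Λ.dist (g x) (g y) ≤ Λ.dist x y := by
    intro g hg x y
    obtain ⟨w, hw⟩ := (hconn x y).exists_walk_length_eq_dist
    obtain ⟨w', hw'⟩ := hwalk g hg w
    calc Λ.dist (g x) (g y) ≤ w'.length := SimpleGraph.dist_le _
      _ = w.length := hw'
      _ = Λ.dist x y := hw
  have hdistMove : ∀ g ∈ G, ∀ x y : X, Λ.dist (g x) (g y) = Λ.dist x y := by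
    intro g hg x y
    refine le_antisymm (hle g hg x y) ?_
    have h2 := hle g⁻¹ (inv_mem hg) (g x) (g y)
    simpa using h2
  -- the parity graph
  let Δodd : SimpleGraph X :=
    { Adj := fun x y => x ≠ y ∧ Odd (Λ.dist x y)
      symm := by
        constructor
        rintro x y ⟨h1, h2⟩
        exact ⟨h1.symm, by rwa [SimpleGraph.dist_comm] at h2⟩
      loopless := ⟨fun x h => h.1 rfl⟩ }
  have hΔoddInv : GInv G Δodd := by
    intro g hg x y
    show (x ≠ y ∧ Odd (Λ.dist x y)) ↔ (g x ≠ g y ∧ Odd (Λ.dist (g x) (g y)))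
    constructor
    · rintro ⟨h1, h2⟩
      exact ⟨fun hc => h1 (g.injective hc), by rwa [hdistMove g hg x y]⟩
    · rintro ⟨h1, h2⟩
      exact ⟨fun hc => h1 (by rw [hc]), by rwa [hdistMove g hg x y] at h2⟩
  -- near-equidistance for adjacent pairs
  have hU : ∀ x y : X, Λ.Adj x y → {z : X | Λ.dist x z ≠ Λ.dist y z}.Finite := by
    intro x y hxy
    have hdxy : Λ.dist x y = 1 := SimpleGraph.dist_eq_one_iff_adj.mpr hxy
    have hsub : {z : X | Λ.dist x z ≠ Λ.dist y z} ⊆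
        symmDiff (Δodd.neighborSet x) (Δodd.neighborSet y) ∪ {x, y} := by
      intro z hz
      simp only [Set.mem_setOf_eq] at hz
      by_cases hzx : z = x
      · exact Or.inr (by simp [hzx])
      by_cases hzy : z = y
      · exact Or.inr (by simp [hzy])
      left
      have ht1 : Λ.dist x z ≤ Λ.dist x y + Λ.dist y z := hCon.dist_triangle
      have ht2 : Λ.dist y z ≤ Λ.dist y x + Λ.dist x z := hCon.dist_triangle
      have hyx : Λ.dist y x = 1 := by rw [SimpleGraph.dist_comm]; exact hdxy
      rw [hdxy] at ht1
      rw [hyx] at ht2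
      have hcase : Λ.dist y z = Λ.dist x z + 1 ∨ Λ.dist x z = Λ.dist y z + 1 := by omega
      have hodd : (Odd (Λ.dist x z) ↔ ¬ Odd (Λ.dist y z)) := by
        rcases hcase with h | h <;> rw [h] <;> simp [Nat.odd_add_one]
      rw [Set.mem_symmDiff]
      simp only [SimpleGraph.mem_neighborSet]
      show (Δodd.Adj x z ∧ ¬ Δodd.Adj y z) ∨ (Δodd.Adj y z ∧ ¬ Δodd.Adj x z)
      have hxz : x ≠ z := fun h => hzx h.symm
      have hyz : y ≠ z := fun h => hzy h.symm
      by_cases ho : Odd (Λ.dist x z)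
      · exact Or.inl ⟨⟨hxz, ho⟩, fun hc => (hodd.mp ho) hc.2⟩
      · refine Or.inr ⟨⟨hyz, ?_⟩, fun hc => ho hc.2⟩
        by_contra hno
        exact ho (by tauto)
    refine Set.Finite.subset ?_ hsub
    exact (hall Δodd hΔoddInv x y).union (by simp)
  -- the finite exceptional set
  have hE : (insert p (⋃ y ∈ Λ.neighborSet p, {z : X | Λ.dist p z ≠ Λ.dist y z})).Finite := by
    refine Set.Finite.insert _ (Set.Finite.biUnion (hlf p) ?_)
    intro y hy
    exact hU p y hy
  obtain ⟨z₀, hz₀⟩ := ((Set.infinite_univ (α := X)).diff hE).nonempty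
  have hz₀E : z₀ ∉ insert p (⋃ y ∈ Λ.neighborSet p, {z : X | Λ.dist p z ≠ Λ.dist y z}) := hz₀.2
  have hz₀p : z₀ ≠ p := fun h => hz₀E (by simp [h])
  have hnz : Λ.dist p z₀ ≠ 0 :=
    fun h => hz₀p (((hconn p z₀).dist_eq_zero_iff.mp h).symm)
  obtain ⟨w, hw⟩ := (hconn p z₀).exists_walk_length_eq_dist
  cases w with
  | nil => exact hz₀p rfl |>.elim
  | @cons _ b _ had w' =>
    have hb : b ∈ Λ.neighborSet p := had
    have h1 : Λ.dist b z₀ ≤ w'.length := SimpleGraph.dist_le w'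
    have hlen : w'.length + 1 = Λ.dist p z₀ := by simpa using hw
    have heqd : Λ.dist p z₀ = Λ.dist b z₀ := by
      by_contra hne
      refine hz₀E (Set.mem_insert_iff.mpr (Or.inr ?_))
      exact Set.mem_biUnion hb hne
    omega

end Aux

/-- G primitive, not 2-homogeneous, on infinite X; then some G-invariant graph Γ
    has Γ(x) △ Γ(y) infinite for all distinct x, y. -/
theorem stmt9 {X : Type*} [Infinite X] [DecidableEq X] (G : Subgroup (Equiv.Perm X))
    (htrans : ∀ x y : X, ∃ g ∈ G, g x = y)
    (hprim : ∀ r : Setoid X, (∀ g ∈ G, ∀ x y : X, r.r x y → r.r (g x) (g y)) →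
      (∀ x y : X, r.r x y → x = y) ∨ (∀ x y : X, r.r x y))
    (hnot2hom : ¬ ∀ s t : Finset X, s.card = 2 → t.card = 2 → ∃ g ∈ G, s.image g = t) :
    ∃ Γ : SimpleGraph X,
      (∀ g ∈ G, ∀ x y : X, Γ.Adj x y ↔ Γ.Adj (g x) (g y)) ∧
      ∀ x y : X, x ≠ y → (symmDiff (Γ.neighborSet x) (Γ.neighborSet y)).Infinite := by
  classical
  by_contra hGoal
  -- Standing assumption: every G-invariant graph has all symmetric differences finite.
  have hall : ∀ Δ : SimpleGraph X, GInv G Δ →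
      ∀ x y : X, (symmDiff (Δ.neighborSet x) (Δ.neighborSet y)).Finite := by
    intro Δ hinv
    have hsetoid := hprim ⟨fun x y => (symmDiff (Δ.neighborSet x) (Δ.neighborSet y)).Finite,
      ⟨fun x => by rw [symmDiff_self, Set.bot_eq_empty]; exact Set.finite_empty,
        fun {x y} h => by rwa [symmDiff_comm],
        fun {x y z} h1 h2 => Set.Finite.subset (h1.union h2) (sdTri _ _ _)⟩⟩
      (by
        intro g hg x y hfin
        show (symmDiff (Δ.neighborSet (g x)) (Δ.neighborSet (g y))).Finite
        rw [nbhdMove hinv hg x, nbhdMove hinv hg y, ← Set.image_symmDiff g.injective]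
        exact hfin.image _)
    rcases hsetoid with heq | htot
    · exfalso
      refine hGoal ⟨Δ, hinv, fun x y hxy => ?_⟩
      intro hfin
      exact hxy (heq x y hfin)
    · exact htot
  -- A nontrivial invariant graph from non-2-homogeneity.
  push_neg at hnot2hom
  obtain ⟨s, t, hs2, ht2, hno⟩ := hnot2hom
  obtain ⟨a, b, hab, rfl⟩ := Finset.card_eq_two.mp hs2
  obtain ⟨c, d, hcd, rfl⟩ := Finset.card_eq_two.mp ht2
  let Γ0 : SimpleGraph X :=
    { Adj := fun x y => ∃ g ∈ G, (g a = x ∧ g b = y) ∨ (g a = y ∧ g b = x)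
      symm := by
        constructor
        rintro x y ⟨g, hg, h | h⟩
        · exact ⟨g, hg, Or.inr h⟩
        · exact ⟨g, hg, Or.inl h⟩
      loopless := by
        constructor
        rintro x ⟨g, hg, h | h⟩ <;>
          exact hab (g.injective (h.1.trans h.2.symm)) }
  have hΓ0inv : GInv G Γ0 := by
    intro g hg x y
    constructor
    · rintro ⟨g', hg', h | h⟩
      · exact ⟨g * g', mul_mem hg hg', Or.inl (by simp [Equiv.Perm.mul_apply, h.1, h.2])⟩
      · exact ⟨g * g', mul_mem hg hg', Or.inr (by simp [Equiv.Perm.mul_apply, h.1, h.2])⟩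
    · rintro ⟨g', hg', h | h⟩
      · refine ⟨g⁻¹ * g', mul_mem (inv_mem hg) hg', Or.inl ?_⟩
        constructor
        · have := h.1; simp [Equiv.Perm.mul_apply, this]
        · have := h.2; simp [Equiv.Perm.mul_apply, this]
      · refine ⟨g⁻¹ * g', mul_mem (inv_mem hg) hg', Or.inr ?_⟩
        constructor
        · have := h.1; simp [Equiv.Perm.mul_apply, this]
        · have := h.2; simp [Equiv.Perm.mul_apply, this]
  have hedge : Γ0.Adj a b := ⟨1, one_mem G, Or.inl ⟨rfl, rfl⟩⟩
  have hnonedge : ¬ Γ0.Adj c d := by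
    rintro ⟨g, hg, h | h⟩
    · refine hno g hg ?_
      rw [Finset.image_insert, Finset.image_singleton, h.1, h.2]
    · refine hno g hg ?_
      rw [Finset.image_insert, Finset.image_singleton, h.1, h.2, Finset.pair_comm]
  -- notation
  set N : X → Set X := fun x => Γ0.neighborSet x with hN
  have hsdN : ∀ x y : X, (symmDiff (N x) (N y)).Finite := hall Γ0 hΓ0inv
  -- moving neighborhoods around
  have hNmove : ∀ x y : X, ∃ g : Equiv.Perm X, g ∈ G ∧ N y = g '' N x := by
    intro x y
    obtain ⟨g, hg, hgxy⟩ := htrans x y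
    exact ⟨g, hg, by rw [← hgxy, hN]; exact nbhdMove hΓ0inv hg x⟩
  -- Case 1 : Γ0 locally finite
  by_cases hfin1 : (N a).Finite
  · have hlf : ∀ x : X, (Γ0.neighborSet x).Finite := by
      intro x
      obtain ⟨g, hg, hxy⟩ := hNmove a x
      rw [show Γ0.neighborSet x = N x from rfl, hxy]
      exact hfin1.image _
    exact (locfinContra G hprim Γ0 hΓ0inv hedge hlf hall).elim
  -- complement graph
  have hΓ0cinv : GInv G Γ0ᶜ := by
    intro g hg x y
    rw [SimpleGraph.compl_adj, SimpleGraph.compl_adj, ← hΓ0inv g hg x y]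
    constructor
    · rintro ⟨h1, h2⟩
      exact ⟨fun hc => h1 (g.injective hc), h2⟩
    · rintro ⟨h1, h2⟩
      exact ⟨fun hc => h1 (by rw [hc]), h2⟩
  have hcedge : Γ0ᶜ.Adj c d := ⟨hcd, hnonedge⟩
  -- Case 2 : Γ0ᶜ locally finite
  by_cases hfin2 : (Γ0ᶜ.neighborSet c).Finite
  · have hlf : ∀ x : X, (Γ0ᶜ.neighborSet x).Finite := by
      intro x
      obtain ⟨g, hg, hgxy⟩ := htrans c x
      rw [← hgxy, nbhdMove hΓ0cinv hg c]
      exact hfin2.image _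
    exact (locfinContra G hprim Γ0ᶜ hΓ0cinv hcedge hlf hall).elim
  -- Now all neighborhoods are infinite and co-infinite.
  have hNinf : ∀ x : X, (N x).Infinite := by
    intro x
    obtain ⟨g, hg, hxy⟩ := hNmove a x
    rw [hxy]
    exact (show (N a).Infinite from hfin1).image (g.injective.injOn)
  have hNcinf : ∀ x : X, ((N x)ᶜ : Set X).Infinite := by
    intro x
    obtain ⟨g, hg, hgxy⟩ := htrans c x
    have : (Γ0ᶜ.neighborSet x).Infinite := by
      rw [← hgxy, nbhdMove hΓ0cinv hg c]
      exact (show (Γ0ᶜ.neighborSet c).Infinite from hfin2).image (g.injective.injOn)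
    refine this.mono ?_
    intro z hz
    have hz' : x ≠ z ∧ ¬ Γ0.Adj x z := hz
    exact hz'.2
  -- the symmetric-difference metric
  set k : X → X → ℕ := fun x y => (symmDiff (N x) (N y)).ncard with hk
  have hksymm : ∀ x y : X, k x y = k y x := fun x y => by
    show (symmDiff (N x) (N y)).ncard = (symmDiff (N y) (N x)).ncard
    rw [symmDiff_comm]
  have hkmove : ∀ g ∈ G, ∀ x y : X, k (g x) (g y) = k x y := by
    intro g hg x y
    show (symmDiff (Γ0.neighborSet (g x)) (Γ0.neighborSet (g y))).ncard = _
    rw [nbhdMove hΓ0inv hg x, nbhdMove hΓ0inv hg y, ← Set.image_symmDiff g.injective,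
      Set.ncard_image_of_injective _ g.injective]
  -- the minimal distance between distinct points
  have hPex : ∃ j : ℕ, ∃ x y : X, x ≠ y ∧ k x y ≤ j := by
    obtain ⟨x, y, hxy⟩ := exists_pair_ne X
    exact ⟨k x y, x, y, hxy, le_refl _⟩
  set j₀ := Nat.find hPex with hj₀
  obtain ⟨x1, y1, hx1y1, hkx1y1⟩ := Nat.find_spec hPex
  -- the graph of pairs at distance ≤ j₀
  let Δ : SimpleGraph X :=
    { Adj := fun x y => x ≠ y ∧ k x y ≤ j₀
      symm := by constructor; rintro x y ⟨h1, h2⟩; exact ⟨h1.symm, by rwa [hksymm y x]⟩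
      loopless := ⟨fun x h => h.1 rfl⟩ }
  have hΔinv : GInv G Δ := by
    intro g hg x y
    show (x ≠ y ∧ k x y ≤ j₀) ↔ (g x ≠ g y ∧ k (g x) (g y) ≤ j₀)
    constructor
    · rintro ⟨h1, h2⟩
      exact ⟨fun hc => h1 (g.injective hc), by rwa [hkmove g hg x y]⟩
    · rintro ⟨h1, h2⟩
      exact ⟨fun hc => h1 (by rw [hc]), by rwa [hkmove g hg x y] at h2⟩
  have hΔedge : Δ.Adj x1 y1 := ⟨hx1y1, hkx1y1⟩
  -- Case 3 : Δ locally finite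
  by_cases hfin3 : (Δ.neighborSet x1).Finite
  · have hlf : ∀ x : X, (Δ.neighborSet x).Finite := by
      intro x
      obtain ⟨g, hg, hgxy⟩ := htrans x1 x
      rw [← hgxy, nbhdMove hΔinv hg x1]
      exact hfin3.image _
    exact (locfinContra G hprim Δ hΔinv hΔedge hlf hall).elim
  -- Case 4 : Δ has an infinite neighborhood, hence k is bounded by 2 j₀.
  have hWinf : ∀ x : X, (Δ.neighborSet x).Infinite := by
    intro x
    obtain ⟨g, hg, hgxy⟩ := htrans x1 x
    rw [← hgxy, nbhdMove hΔinv hg x1]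
    exact (show (Δ.neighborSet x1).Infinite from hfin3).image (g.injective.injOn)
  have hWsd := hall Δ hΔinv
  have hbound : ∀ x y : X, k x y ≤ 2 * j₀ := by
    intro x y
    have hdiff : (Δ.neighborSet x \ Δ.neighborSet y) ⊆
        symmDiff (Δ.neighborSet x) (Δ.neighborSet y) := fun z hz => Or.inl hz
    obtain ⟨z, hz⟩ := ((hWinf x).diff (Set.Finite.subset (hWsd x y) hdiff)).nonempty
    have hzx : Δ.Adj x z := hz.1
    have hzy : Δ.Adj y z := by
      by_contra hc
      exact hz.2 ⟨hz.1, hc⟩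
    have h1 : k x z ≤ j₀ := hzx.2
    have h2 : k z y ≤ j₀ := by rw [hksymm z y]; exact hzy.2
    have htri : k x y ≤ k x z + k z y := by
      rw [hk]
      calc (symmDiff (N x) (N y)).ncard
          ≤ (symmDiff (N x) (N z) ∪ symmDiff (N z) (N y)).ncard := by
            refine Set.ncard_le_ncard (sdTri _ _ _) ?_
            exact (hsdN x z).union (hsdN z y)
        _ ≤ (symmDiff (N x) (N z)).ncard + (symmDiff (N z) (N y)).ncard :=
            Set.ncard_union_le _ _
    omega
  -- The counting contradiction.
  set S : Set X := N x1 with hS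
  have hFfin : ∀ x : X, (symmDiff (N x) S).Finite := fun x => hsdN x x1
  have hFcard : ∀ x : X, (symmDiff (N x) S).ncard ≤ 2 * j₀ := fun x => hbound x x1
  obtain ⟨V, hVsub, hVcard⟩ := (hNcinf x1).exists_subset_card_eq (2 * j₀ + 1)
  have hUfin : (⋃ v ∈ V, symmDiff (N v) S).Finite :=
    Set.Finite.biUnion V.finite_toSet (fun v _ => hFfin v)
  obtain ⟨u, hu⟩ := ((hNinf x1).diff hUfin).nonempty
  have huS : u ∈ S := hu.1
  have huF : ∀ v ∈ V, u ∉ symmDiff (N v) S := by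
    intro v hv hc
    exact hu.2 (Set.mem_biUnion hv hc)
  have hVF : (V : Set X) ⊆ symmDiff (N u) S := by
    intro v hv
    have hvS : v ∉ S := hVsub hv
    -- u ∈ N v
    have huNv : u ∈ N v := by
      by_contra hc
      exact huF v hv (Or.inr ⟨huS, hc⟩)
    -- v ∈ N u by symmetry of the graph
    have hvNu : v ∈ N u := Γ0.adj_symm huNv
    exact Or.inl ⟨hvNu, hvS⟩
  have : (2 * j₀ + 1 : ℕ) ≤ 2 * j₀ := by
    calc (2 * j₀ + 1 : ℕ) = V.card := hVcard.symm
      _ = (V : Set X).ncard := (Set.ncard_coe_finset V).symm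
      _ ≤ (symmDiff (N u) S).ncard := Set.ncard_le_ncard hVF (hFfin u)
      _ ≤ 2 * j₀ := hFcard u
  omega
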